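/- Let R > 0 and let p > 2 be a real number. Let u : [0,R] → ℝ be continuous on [0,R] and differentiable on (0,R), and suppose that the function ξ ↦ ξ|u'(ξ)|^p is integrable on (0,R). Then for all s, t ∈ [0,R] with s ≤ t, |u(t) − u(s)| ≤ ((p−1)/(p−2))^{(p−1)/p} (t−s)^{(p−2)/p} (∫₀^R ξ|u'(ξ)|^p dξ)^{1/p}. In particular, any such u is Hölder continuous on [0,R] with exponent (p−2)/p (the embedding W_1^{1,p}(0,R) ↪ C^{(p−2)/p}([0,R]) used in the two-dimensional case). -/

import Mathlib

open Real MeasureTheory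

private lemma rpow_add_le_add_rpow_real {x y c : ℝ} (hx : 0 ≤ x) (hy : 0 ≤ y)
    (h0 : 0 ≤ c) (h1 : c ≤ 1) : (x + y) ^ c ≤ x ^ c + y ^ c := by
  have h := NNReal.rpow_add_le_add_rpow x.toNNReal y.toNNReal h0 h1
  have h' := NNReal.coe_le_coe.mpr h
  push_cast at h'
  rwa [Real.coe_toNNReal x hx, Real.coe_toNNReal y hy] at h'

private lemma memLp_of_int_rpow {α : Type*} [MeasurableSpace α] {μ : Measure α} {f : α → ℝ}
    {p : ℝ} (hp : 0 < p) (hm : AEStronglyMeasurable f μ)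
    (hi : Integrable (fun x => |f x| ^ p) μ) : MemLp f (ENNReal.ofReal p) μ := by
  have h0 : ENNReal.ofReal p ≠ 0 := by simp [ENNReal.ofReal_eq_zero, not_le, hp]
  have htop : ENNReal.ofReal p ≠ ⊤ := ENNReal.ofReal_ne_top
  have h := memLp_norm_rpow_iff (p := ENNReal.ofReal p) (q := ENNReal.ofReal p) hm h0 htop
  rw [ENNReal.div_self h0 htop] at h
  refine h.mp ?_
  rw [memLp_one_iff_integrable]
  simp only [ENNReal.toReal_ofReal hp.le, Real.norm_eq_abs]
  exact hi

/-- the two-dimensional weighted Hölder estimate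
`|u(t) - u(s)| ≤ ((p-1)/(p-2))^((p-1)/p) (t-s)^((p-2)/p) (∫₀^R ξ|u'(ξ)|^p dξ)^(1/p)`
for `p > 2`, and the resulting Hölder continuity of exponent `(p-2)/p`
(the embedding `W₁^{1,p}(0,R) ↪ C^{(p-2)/p}([0,R])`). -/
theorem stmt17 (R p : ℝ) (hR : 0 < R) (hp : 2 < p)
    (u u' : ℝ → ℝ) (hu : ContinuousOn u (Set.Icc 0 R))
    (hderiv : ∀ ξ ∈ Set.Ioo (0:ℝ) R, HasDerivAt u (u' ξ) ξ)
    (hint : IntegrableOn (fun ξ => ξ * |u' ξ| ^ p) (Set.Ioo 0 R)) :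
    (∀ s ∈ Set.Icc (0:ℝ) R, ∀ t ∈ Set.Icc (0:ℝ) R, s ≤ t →
      |u t - u s| ≤ ((p - 1) / (p - 2)) ^ ((p - 1) / p) * (t - s) ^ ((p - 2) / p) *
        (∫ ξ in Set.Ioo (0:ℝ) R, ξ * |u' ξ| ^ p) ^ (1 / p))
    ∧ ∃ C : ℝ, 0 ≤ C ∧ ∀ s ∈ Set.Icc (0:ℝ) R, ∀ t ∈ Set.Icc (0:ℝ) R,
        |u t - u s| ≤ C * |t - s| ^ ((p - 2) / p) := by
  have hp0 : (0:ℝ) < p := by linarith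
  have hp1 : (1:ℝ) < p := by linarith
  have hp1' : (0:ℝ) < p - 1 := by linarith
  have hp2 : (0:ℝ) < p - 2 := by linarith
  have hpq : p.HolderConjugate (p / (p - 1)) := Real.HolderConjugate.conjExponent hp1
  set q : ℝ := p / (p - 1) with hqdef
  have hq0 : 0 < q := hpq.symm.pos
  set r : ℝ := -(1 / (p - 1)) with hrdef
  have hr : (-1:ℝ) < r := by
    have : 1 / (p - 1) < 1 := by rw [div_lt_one hp1']; linarith
    rw [hrdef]; linarith
  have hrq : -(1 / p) * q = r := by
    rw [hqdef, hrdef]; field_simp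
  have hr1 : r + 1 = (p - 2) / (p - 1) := by
    rw [hrdef]; field_simp; ring
  have hr1pos : 0 < r + 1 := by linarith
  have hc0 : 0 ≤ r + 1 := hr1pos.le
  have hc1 : r + 1 ≤ 1 := by
    rw [hr1, div_le_one hp1']; linarith
  have hoq : 1 / q = (p - 1) / p := by rw [hqdef, one_div_div]
  -- measurability of u'
  have hu'm : AEStronglyMeasurable u' (volume.restrict (Set.Ioo 0 R)) := by
    have hae : ∀ᵐ ξ ∂(volume.restrict (Set.Ioo 0 R)), deriv u ξ = u' ξ := by
      filter_upwards [ae_restrict_mem measurableSet_Ioo] with ξ hξ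
      exact (hderiv ξ hξ).deriv
    exact ((measurable_deriv u).aestronglyMeasurable).congr hae
  -- integrability of the weight
  have hw : IntegrableOn (fun ξ : ℝ => ξ ^ r) (Set.Ioo 0 R) := by
    have h := intervalIntegral.intervalIntegrable_rpow' (a := 0) (b := R) hr
    rw [intervalIntegrable_iff_integrableOn_Ioc_of_le hR.le] at h
    exact h.mono_set Set.Ioo_subset_Ioc_self
  set I : ℝ := ∫ ξ in Set.Ioo (0:ℝ) R, ξ * |u' ξ| ^ p with hIdef
  have hInonneg : 0 ≤ I := by
    refine setIntegral_nonneg measurableSet_Ioo fun x hx => ?_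
    exact mul_nonneg hx.1.le (Real.rpow_nonneg (abs_nonneg _) _)
  have key : ∀ s ∈ Set.Icc (0:ℝ) R, ∀ t ∈ Set.Icc (0:ℝ) R, s ≤ t →
      |u t - u s| ≤ ((p - 1) / (p - 2)) ^ ((p - 1) / p) * (t - s) ^ ((p - 2) / p) *
        I ^ (1 / p) := by
    intro s hs t ht hst
    have sub1 : Set.Ioo s t ⊆ Set.Ioo 0 R := fun x hx =>
      ⟨lt_of_le_of_lt hs.1 hx.1, lt_of_lt_of_le hx.2 ht.2⟩
    have hles : volume.restrict (Set.Ioo s t) ≤ volume.restrict (Set.Ioo 0 R) :=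
      Measure.restrict_mono sub1 le_rfl
    have hu'm' : AEStronglyMeasurable u' (volume.restrict (Set.Ioo s t)) :=
      hu'm.mono_measure hles
    have hw' : IntegrableOn (fun ξ : ℝ => ξ ^ r) (Set.Ioo s t) := hw.mono_set sub1
    have hint' : IntegrableOn (fun ξ => ξ * |u' ξ| ^ p) (Set.Ioo s t) := hint.mono_set sub1
    have hpos : ∀ x ∈ Set.Ioo s t, (0:ℝ) < x := fun x hx => lt_of_le_of_lt hs.1 hx.1
    -- pointwise algebraic identities
    have hab : ∀ x ∈ Set.Ioo s t, x ^ (-(1/p)) * (x ^ (1/p) * |u' x|) = |u' x| := by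
      intro x hx
      rw [← mul_assoc, ← Real.rpow_add (hpos x hx)]
      norm_num
    have haq : ∀ x ∈ Set.Ioo s t, (x ^ (-(1/p))) ^ q = x ^ r := by
      intro x hx
      rw [← Real.rpow_mul (hpos x hx).le, hrq]
    have hbp : ∀ x ∈ Set.Ioo s t, (x ^ (1/p) * |u' x|) ^ p = x * |u' x| ^ p := by
      intro x hx
      rw [Real.mul_rpow (Real.rpow_nonneg (hpos x hx).le _) (abs_nonneg _),
        ← Real.rpow_mul (hpos x hx).le, one_div_mul_cancel hp0.ne', Real.rpow_one]
    -- integrability of u' via Young's inequality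
    have hIu : IntegrableOn u' (Set.Ioo s t) := by
      have hh : Integrable (fun ξ => ξ ^ r / q + ξ * |u' ξ| ^ p / p)
          (volume.restrict (Set.Ioo s t)) := (hw'.div_const q).add (hint'.div_const p)
      refine hh.mono' hu'm' ?_
      filter_upwards [ae_restrict_mem measurableSet_Ioo] with ξ hξ
      have hξ0 : 0 < ξ := hpos ξ hξ
      have ha : 0 ≤ ξ ^ (-(1/p)) := Real.rpow_nonneg hξ0.le _
      have hb : 0 ≤ ξ ^ (1/p) * |u' ξ| := mul_nonneg (Real.rpow_nonneg hξ0.le _) (abs_nonneg _)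
      have hy := Real.young_inequality_of_nonneg ha hb hpq.symm
      rw [haq ξ hξ, hbp ξ hξ, hab ξ hξ] at hy
      rw [Real.norm_eq_abs]
      exact hy
    -- fundamental theorem of calculus
    have hIu2 : IntervalIntegrable u' volume s t := by
      rw [intervalIntegrable_iff_integrableOn_Ioc_of_le hst,
        integrableOn_Ioc_iff_integrableOn_Ioo]
      exact hIu
    have hftc : ∫ ξ in s..t, u' ξ = u t - u s :=
      intervalIntegral.integral_eq_sub_of_hasDerivAt_of_le hst
        (hu.mono (Set.Icc_subset_Icc hs.1 ht.2)) (fun x hx => hderiv x (sub1 hx)) hIu2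
    have h1 : |u t - u s| ≤ ∫ ξ in Set.Ioo s t, |u' ξ| := by
      rw [← hftc]
      refine le_trans (intervalIntegral.abs_integral_le_integral_abs hst) (le_of_eq ?_)
      rw [intervalIntegral.integral_of_le hst, MeasureTheory.integral_Ioc_eq_integral_Ioo]
    -- Hölder's inequality
    set f : ℝ → ℝ := fun ξ => ξ ^ (-(1/p)) with hfdef
    set g : ℝ → ℝ := fun ξ => ξ ^ (1/p) * |u' ξ| with hgdef
    have hcont : ContinuousOn (fun x : ℝ => x ^ (1/p)) (Set.Ioo s t) :=
      continuousOn_id.rpow_const fun x hx => Or.inl (hpos x hx).ne'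
    have hcont' : ContinuousOn f (Set.Ioo s t) :=
      continuousOn_id.rpow_const fun x hx => Or.inl (hpos x hx).ne'
    have hfm : AEStronglyMeasurable f (volume.restrict (Set.Ioo s t)) :=
      hcont'.aestronglyMeasurable measurableSet_Ioo
    have hgm : AEStronglyMeasurable g (volume.restrict (Set.Ioo s t)) :=
      (hcont.aestronglyMeasurable measurableSet_Ioo).mul
        (hu'm'.norm.congr (Filter.Eventually.of_forall fun x => Real.norm_eq_abs _))
    have hfL : MemLp f (ENNReal.ofReal q) (volume.restrict (Set.Ioo s t)) := by
      refine memLp_of_int_rpow hq0 hfm ?_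
      refine hw'.congr ?_
      filter_upwards [ae_restrict_mem measurableSet_Ioo] with ξ hξ
      rw [hfdef]
      simp only
      rw [abs_of_nonneg (Real.rpow_nonneg (hpos ξ hξ).le _), haq ξ hξ]
    have hgL : MemLp g (ENNReal.ofReal p) (volume.restrict (Set.Ioo s t)) := by
      refine memLp_of_int_rpow hp0 hgm ?_
      refine hint'.congr ?_
      filter_upwards [ae_restrict_mem measurableSet_Ioo] with ξ hξ
      rw [hgdef]
      simp only
      rw [abs_of_nonneg (mul_nonneg (Real.rpow_nonneg (hpos ξ hξ).le _) (abs_nonneg _)),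
        hbp ξ hξ]
    have hfnn : 0 ≤ᵐ[volume.restrict (Set.Ioo s t)] f := by
      filter_upwards [ae_restrict_mem measurableSet_Ioo] with ξ hξ
      exact Real.rpow_nonneg (hpos ξ hξ).le _
    have hgnn : 0 ≤ᵐ[volume.restrict (Set.Ioo s t)] g := by
      filter_upwards [ae_restrict_mem measurableSet_Ioo] with ξ hξ
      exact mul_nonneg (Real.rpow_nonneg (hpos ξ hξ).le _) (abs_nonneg _)
    have holder := MeasureTheory.integral_mul_le_Lp_mul_Lq_of_nonneg hpq.symm hfnn hgnn hfL hgL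
    have h2 : ∫ ξ in Set.Ioo s t, |u' ξ| = ∫ ξ in Set.Ioo s t, f ξ * g ξ := by
      refine setIntegral_congr_fun measurableSet_Ioo fun x hx => ?_
      exact (hab x hx).symm
    -- estimate the weight integral
    have hAcongr : ∫ ξ in Set.Ioo s t, f ξ ^ q = ∫ ξ in Set.Ioo s t, ξ ^ r := by
      refine setIntegral_congr_fun measurableSet_Ioo fun x hx => ?_
      exact haq x hx
    have hAval : ∫ ξ in Set.Ioo s t, (ξ:ℝ) ^ r = (t ^ (r+1) - s ^ (r+1)) / (r+1) := by
      rw [← MeasureTheory.integral_Ioc_eq_integral_Ioo, ← intervalIntegral.integral_of_le hst]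
      exact integral_rpow (Or.inl hr)
    have hsub : t ^ (r+1) - s ^ (r+1) ≤ (t - s) ^ (r+1) := by
      have h := rpow_add_le_add_rpow_real (sub_nonneg.2 hst) hs.1 hc0 hc1
      rw [sub_add_cancel] at h
      linarith
    have hA : ∫ ξ in Set.Ioo s t, f ξ ^ q ≤ (p-1)/(p-2) * (t-s) ^ (r+1) := by
      rw [hAcongr, hAval]
      have h2' := (div_le_div_iff_of_pos_right hr1pos).mpr hsub
      refine h2'.trans (le_of_eq ?_)
      rw [hr1]
      field_simp
    have hAnn : 0 ≤ ∫ ξ in Set.Ioo s t, f ξ ^ q := by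
      rw [hAcongr]
      exact setIntegral_nonneg measurableSet_Ioo fun x hx => Real.rpow_nonneg (hpos x hx).le _
    have hA2 : (∫ ξ in Set.Ioo s t, f ξ ^ q) ^ (1/q) ≤
        ((p-1)/(p-2)) ^ ((p-1)/p) * (t-s) ^ ((p-2)/p) := by
      have h := Real.rpow_le_rpow hAnn hA (by positivity : (0:ℝ) ≤ 1/q)
      refine h.trans (le_of_eq ?_)
      rw [Real.mul_rpow (by positivity) (Real.rpow_nonneg (sub_nonneg.2 hst) _),
        ← Real.rpow_mul (sub_nonneg.2 hst), hoq]
      congr 1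
      rw [hr1]
      field_simp
    -- estimate the energy integral
    have hBcongr : ∫ ξ in Set.Ioo s t, g ξ ^ p = ∫ ξ in Set.Ioo s t, ξ * |u' ξ| ^ p := by
      refine setIntegral_congr_fun measurableSet_Ioo fun x hx => ?_
      exact hbp x hx
    have hB : ∫ ξ in Set.Ioo s t, ξ * |u' ξ| ^ p ≤ I := by
      refine setIntegral_mono_set hint ?_ (HasSubset.Subset.eventuallyLE sub1)
      filter_upwards [ae_restrict_mem measurableSet_Ioo] with x hx
      exact mul_nonneg hx.1.le (Real.rpow_nonneg (abs_nonneg _) _)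
    have hBnn : 0 ≤ ∫ ξ in Set.Ioo s t, g ξ ^ p := by
      rw [hBcongr]
      exact setIntegral_nonneg measurableSet_Ioo fun x hx =>
        mul_nonneg (hpos x hx).le (Real.rpow_nonneg (abs_nonneg _) _)
    have hB2 : (∫ ξ in Set.Ioo s t, g ξ ^ p) ^ (1/p) ≤ I ^ (1/p) := by
      refine Real.rpow_le_rpow hBnn ?_ (by positivity)
      rw [hBcongr]; exact hB
    calc |u t - u s| ≤ ∫ ξ in Set.Ioo s t, |u' ξ| := h1
      _ = ∫ ξ in Set.Ioo s t, f ξ * g ξ := h2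
      _ ≤ (∫ ξ in Set.Ioo s t, f ξ ^ q) ^ (1/q) * (∫ ξ in Set.Ioo s t, g ξ ^ p) ^ (1/p) :=
          holder
      _ ≤ (((p-1)/(p-2)) ^ ((p-1)/p) * (t-s) ^ ((p-2)/p)) * (I ^ (1/p)) := by
          refine mul_le_mul hA2 hB2 (Real.rpow_nonneg hBnn _) ?_
          exact mul_nonneg (Real.rpow_nonneg (by positivity) _)
            (Real.rpow_nonneg (sub_nonneg.2 hst) _)
      _ = _ := by ring
  refine ⟨key, ⟨((p-1)/(p-2)) ^ ((p-1)/p) * I ^ (1/p), ?_, ?_⟩⟩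
  · exact mul_nonneg (Real.rpow_nonneg (by positivity) _) (Real.rpow_nonneg hInonneg _)
  · intro s hs t ht
    rcases le_total s t with h | h
    · have hk := key s hs t ht h
      calc |u t - u s| ≤ ((p - 1) / (p - 2)) ^ ((p - 1) / p) * (t - s) ^ ((p - 2) / p) *
            I ^ (1 / p) := hk
        _ = ((p-1)/(p-2)) ^ ((p-1)/p) * I ^ (1/p) * |t - s| ^ ((p-2)/p) := by
            rw [abs_of_nonneg (sub_nonneg.2 h)]; ring
    · have hk := key t ht s hs h
      calc |u t - u s| = |u s - u t| := abs_sub_comm _ _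
        _ ≤ ((p - 1) / (p - 2)) ^ ((p - 1) / p) * (s - t) ^ ((p - 2) / p) *
            I ^ (1 / p) := hk
        _ = ((p-1)/(p-2)) ^ ((p-1)/p) * I ^ (1/p) * |t - s| ^ ((p-2)/p) := by
            rw [abs_sub_comm, abs_of_nonneg (sub_nonneg.2 h)]; ring
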